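/- arXiv:2501.16393 — 2 statements merged into one kernel-verified Lean document; each statement's English description precedes it below -/
import Mathlib

section
/- Let N be a finite player set and v : 2^N → ℝ supermodular with v(∅) = 0. For any ordering π of N, the marginal-contribution vector x_i = v(P_π(i) ∪ {i}) − v(P_π(i)) lies in the core: Σ_{i∈N} x_i = v(N) and Σ_{i∈S} x_i ≥ v(S) for every coalition S ⊆ N. -/
theorem marginal_vector_mem_core (n : ℕ) (v : Finset (Fin n) → ℝ) (hv0 : v ∅ = 0)
    (hsup : ∀ S T : Finset (Fin n), v S + v T ≤ v (S ∪ T) + v (S ∩ T))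
    (π : Equiv.Perm (Fin n)) :
    (∑ i : Fin n,
      (v (insert i (Finset.univ.filter fun j => π.symm j < π.symm i)) -
       v (Finset.univ.filter fun j => π.symm j < π.symm i)) = v Finset.univ) ∧
    ∀ S : Finset (Fin n),
      v S ≤ ∑ i ∈ S,
        (v (insert i (Finset.univ.filter fun j => π.symm j < π.symm i)) -
         v (Finset.univ.filter fun j => π.symm j < π.symm i)) := by
  set x : Fin n → ℝ := fun i =>
    v (insert i (Finset.univ.filter fun j => π.symm j < π.symm i)) -
    v (Finset.univ.filter fun j => π.symm j < π.symm i) with hx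
  set Q : ℕ → Finset (Fin n) :=
    fun k => Finset.univ.filter fun j => (π.symm j : ℕ) < k with hQ
  have hP : ∀ (k : ℕ) (hk : k < n),
      (Finset.univ.filter fun j => π.symm j < π.symm (π ⟨k, hk⟩)) = Q k := by
    intro k hk
    ext j
    simp [hQ, Fin.lt_def]
  have hins : ∀ (k : ℕ) (hk : k < n), insert (π ⟨k, hk⟩) (Q k) = Q (k + 1) := by
    intro k hk
    ext j
    simp only [Finset.mem_insert, hQ, Finset.mem_filter, Finset.mem_univ, true_and]
    constructor
    · rintro (rfl | h)
      · simp
      · omega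
    · intro h
      rcases Nat.lt_succ_iff_lt_or_eq.mp h with h | h
      · right; exact h
      · left
        have : π.symm j = ⟨k, hk⟩ := Fin.ext h
        rw [← this]; simp
  have hnot : ∀ (k : ℕ) (hk : k < n), π ⟨k, hk⟩ ∉ Q k := by
    intro k hk; simp [hQ]
  have hxk : ∀ (k : ℕ) (hk : k < n), x (π ⟨k, hk⟩) = v (Q (k + 1)) - v (Q k) := by
    intro k hk
    rw [hx]
    simp only
    rw [hP k hk, hins k hk]
  have hQ0 : Q 0 = ∅ := by ext j; simp [hQ]
  have hQn : Q n = Finset.univ := by ext j; simp [hQ, Fin.is_lt]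
  have hQsub : ∀ k, Q k ⊆ Q (k + 1) := by
    intro k j hj
    simp only [hQ, Finset.mem_filter, Finset.mem_univ, true_and] at hj ⊢
    omega
  -- telescoping sum
  have hQsum : ∀ k ≤ n, v (Q k) = ∑ i ∈ Q k, x i := by
    intro k hk
    induction k with
    | zero => simp [hQ0, hv0]
    | succ k ih =>
      have hkn : k < n := hk
      rw [← hins k hkn, Finset.sum_insert (hnot k hkn), ← ih (le_of_lt hkn),
        hxk k hkn, hins k hkn]
      ring
  -- core inequality
  have hcore : ∀ S : Finset (Fin n), ∀ k ≤ n, v (S ∩ Q k) ≤ ∑ i ∈ S ∩ Q k, x i := by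
    intro S k hk
    induction k with
    | zero => simp [hQ0, hv0]
    | succ k ih =>
      have hkn : k < n := hk
      have ih' := ih (le_of_lt hkn)
      by_cases hiS : π ⟨k, hkn⟩ ∈ S
      · have hSQ : S ∩ Q (k + 1) = insert (π ⟨k, hkn⟩) (S ∩ Q k) := by
          rw [← hins k hkn]
          ext j
          simp only [Finset.mem_inter, Finset.mem_insert]
          constructor
          · rintro ⟨hjS, rfl | hjQ⟩
            · exact Or.inl rfl
            · exact Or.inr ⟨hjS, hjQ⟩
          · rintro (rfl | ⟨hjS, hjQ⟩)
            · exact ⟨hiS, Or.inl rfl⟩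
            · exact ⟨hjS, Or.inr hjQ⟩
        have hnotin : π ⟨k, hkn⟩ ∉ S ∩ Q k := fun h =>
          hnot k hkn (Finset.mem_of_mem_inter_right h)
        have hsup' := hsup (insert (π ⟨k, hkn⟩) (S ∩ Q k)) (Q k)
        have hU : insert (π ⟨k, hkn⟩) (S ∩ Q k) ∪ Q k = Q (k + 1) := by
          rw [← hins k hkn]
          ext j
          simp only [Finset.mem_union, Finset.mem_insert, Finset.mem_inter]
          tauto
        have hI : insert (π ⟨k, hkn⟩) (S ∩ Q k) ∩ Q k = S ∩ Q k := by
          ext j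
          simp only [Finset.mem_inter, Finset.mem_insert]
          constructor
          · rintro ⟨rfl | ⟨hjS, hjQ⟩, hjQ'⟩
            · exact absurd hjQ' (hnot k hkn)
            · exact ⟨hjS, hjQ⟩
          · rintro ⟨hjS, hjQ⟩
            exact ⟨Or.inr ⟨hjS, hjQ⟩, hjQ⟩
        rw [hU, hI] at hsup'
        rw [hSQ, Finset.sum_insert hnotin, hxk k hkn]
        linarith
      · have hSQ : S ∩ Q (k + 1) = S ∩ Q k := by
          rw [← hins k hkn]
          ext j
          simp only [Finset.mem_inter, Finset.mem_insert]
          constructor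
          · rintro ⟨hjS, rfl | hjQ⟩
            · exact absurd hjS hiS
            · exact ⟨hjS, hjQ⟩
          · rintro ⟨hjS, hjQ⟩
            exact ⟨hjS, Or.inr hjQ⟩
        rw [hSQ]
        exact ih'
  constructor
  · have := hQsum n le_rfl
    rw [hQn] at this
    exact this.symm
  · intro S
    have := hcore S n le_rfl
    rw [hQn, Finset.inter_univ] at this
    exact this
end

section
/- Let v : 2^N → ℝ be supermodular with v(∅) = 0 on a finite player set N. Then the core of the game (N, v) is nonempty; moreover the Shapley value φ_i = (1/|N|!) Σ_π [v(P_π(i) ∪ {i}) − v(P_π(i))], the average of marginal-contribution vectors over all orderings π, lies in the core. -/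
open Finset

private def Pred (n : ℕ) (π : Equiv.Perm (Fin n)) (i : Fin n) : Finset (Fin n) :=
  Finset.univ.filter fun j => π.symm j < π.symm i

private lemma marg_ge (n : ℕ) (v : Finset (Fin n) → ℝ) (hv0 : v ∅ = 0)
    (hsup : ∀ S T : Finset (Fin n), v S + v T ≤ v (S ∪ T) + v (S ∩ T))
    (π : Equiv.Perm (Fin n)) :
    ∀ S : Finset (Fin n),
      v S ≤ ∑ i ∈ S, (v (insert i (Pred n π i)) - v (Pred n π i)) := by
  intro S
  induction S using Finset.strongInduction with
  | _ S ih =>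
    rcases S.eq_empty_or_nonempty with rfl | hS
    · simp [hv0]
    · obtain ⟨i, hi, hmax⟩ := S.exists_max_image (fun j => π.symm j) hS
      have hiP : i ∉ Pred n π i := by simp [Pred]
      have hsub : S.erase i ⊆ Pred n π i := by
        intro j hj
        simp only [Pred, mem_filter, mem_univ, true_and]
        rcases lt_or_eq_of_le (hmax j (mem_of_mem_erase hj)) with h | h
        · exact h
        · exact absurd (π.symm.injective h) (ne_of_mem_erase hj)
      have key := hsup S (Pred n π i)
      have hu : S ∪ Pred n π i = insert i (Pred n π i) := by
        rw [← Finset.insert_erase hi, Finset.insert_union,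
          Finset.union_eq_right.mpr hsub]
      have hint : S ∩ Pred n π i = S.erase i := by
        ext j
        simp only [mem_inter, mem_erase]
        constructor
        · rintro ⟨h1, h2⟩
          exact ⟨fun h => hiP (h ▸ h2), h1⟩
        · rintro ⟨h1, h2⟩
          exact ⟨h2, hsub (Finset.mem_erase.mpr ⟨h1, h2⟩)⟩
      rw [hu, hint] at key
      have ihe := ih (S.erase i) (Finset.erase_ssubset hi)
      rw [← Finset.add_sum_erase _ _ hi]
      linarith

private lemma marg_sum (n : ℕ) (v : Finset (Fin n) → ℝ) (hv0 : v ∅ = 0)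
    (π : Equiv.Perm (Fin n)) :
    ∑ i : Fin n, (v (insert i (Pred n π i)) - v (Pred n π i)) = v Finset.univ := by
  set f : ℕ → ℝ := fun m => v (Finset.univ.filter fun j => (π.symm j : ℕ) < m) with hf
  have h2 : ∀ k : Fin n, Pred n π (π k) =
      Finset.univ.filter fun j => (π.symm j : ℕ) < (k : ℕ) := by
    intro k
    ext j
    simp only [Pred, mem_filter, mem_univ, true_and, Equiv.symm_apply_apply,
      Fin.lt_def]
  have h1 : ∀ k : Fin n, insert (π k) (Pred n π (π k)) =
      Finset.univ.filter fun j => (π.symm j : ℕ) < (k : ℕ) + 1 := by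
    intro k
    ext j
    simp only [Finset.mem_insert, Pred, mem_filter, mem_univ, true_and,
      Equiv.symm_apply_apply, Fin.lt_def, Nat.lt_succ_iff]
    constructor
    · rintro (rfl | h)
      · simp
      · exact Nat.le_of_lt h
    · intro h
      rcases eq_or_lt_of_le h with h | h
      · left
        have : π.symm j = k := Fin.ext h
        rw [← this, Equiv.apply_symm_apply]
      · right; exact h
  calc ∑ i : Fin n, (v (insert i (Pred n π i)) - v (Pred n π i))
      = ∑ k : Fin n, (v (insert (π k) (Pred n π (π k))) - v (Pred n π (π k))) :=
        (Equiv.sum_comp π _).symm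
    _ = ∑ k : Fin n, (f ((k : ℕ) + 1) - f (k : ℕ)) := by
        refine Finset.sum_congr rfl fun k _ => ?_
        rw [h1 k, h2 k]
    _ = ∑ k ∈ Finset.range n, (f (k + 1) - f k) := Fin.sum_univ_eq_sum_range (fun k => f (k + 1) - f k) n
    _ = f n - f 0 := Finset.sum_range_sub f n
    _ = v Finset.univ := by
        have e0 : (Finset.univ.filter fun j : Fin n => (π.symm j : ℕ) < 0) = ∅ := by
          simp
        have en : (Finset.univ.filter fun j : Fin n => (π.symm j : ℕ) < n) =
            Finset.univ := by
          refine Finset.filter_true_of_mem fun j _ => (π.symm j).isLt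
        simp [hf, e0, en, hv0]

theorem shapley_value_mem_core (n : ℕ) (v : Finset (Fin n) → ℝ) (hv0 : v ∅ = 0)
    (hsup : ∀ S T : Finset (Fin n), v S + v T ≤ v (S ∪ T) + v (S ∩ T)) :
    (∑ i : Fin n, (1 / (n.factorial : ℝ)) * ∑ π : Equiv.Perm (Fin n),
        (v (insert i (Finset.univ.filter fun j => π.symm j < π.symm i)) -
         v (Finset.univ.filter fun j => π.symm j < π.symm i)) = v Finset.univ) ∧
    ∀ S : Finset (Fin n),
      v S ≤ ∑ i ∈ S, (1 / (n.factorial : ℝ)) * ∑ π : Equiv.Perm (Fin n),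
        (v (insert i (Finset.univ.filter fun j => π.symm j < π.symm i)) -
         v (Finset.univ.filter fun j => π.symm j < π.symm i)) := by
  have hfac : (0 : ℝ) < n.factorial := by positivity
  have hcard : (Fintype.card (Equiv.Perm (Fin n)) : ℝ) = n.factorial := by
    rw [Fintype.card_perm, Fintype.card_fin]
  constructor
  · rw [← Finset.mul_sum, Finset.sum_comm]
    have : ∀ π : Equiv.Perm (Fin n), ∑ i : Fin n,
        (v (insert i (Finset.univ.filter fun j => π.symm j < π.symm i)) -
         v (Finset.univ.filter fun j => π.symm j < π.symm i)) = v Finset.univ :=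
      fun π => marg_sum n v hv0 π
    rw [Finset.sum_congr rfl fun π _ => this π, Finset.sum_const, Finset.card_univ,
      nsmul_eq_mul, hcard]
    field_simp
  · intro S
    rw [← Finset.mul_sum, Finset.sum_comm]
    have hle : (n.factorial : ℝ) * v S ≤ ∑ π : Equiv.Perm (Fin n), ∑ i ∈ S,
        (v (insert i (Finset.univ.filter fun j => π.symm j < π.symm i)) -
         v (Finset.univ.filter fun j => π.symm j < π.symm i)) := by
      calc (n.factorial : ℝ) * v S
          = ∑ _π : Equiv.Perm (Fin n), v S := by
            rw [Finset.sum_const, Finset.card_univ, nsmul_eq_mul, hcard]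
        _ ≤ _ := Finset.sum_le_sum fun π _ => marg_ge n v hv0 hsup π S
    calc v S = (1 / (n.factorial : ℝ)) * ((n.factorial : ℝ) * v S) := by
          field_simp
      _ ≤ _ := mul_le_mul_of_nonneg_left hle (by positivity)
end
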